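/- Let X and Y be Banach spaces over 𝕂 (= ℝ or ℂ) and let T : X → Y be a bounded linear operator. If the adjoint T* : Y* → X* quasi attains its norm, then T* attains its norm: there exists y₀* ∈ Y* with ‖y₀*‖ = 1 and ‖T* y₀*‖ = ‖T*‖. -/

import Mathlib

variable (𝕜 : Type*) {X Y : Type*} [RCLike 𝕜]
  [NormedAddCommGroup X] [NormedSpace 𝕜 X]
  [NormedAddCommGroup Y] [NormedSpace 𝕜 Y]

/-- The (Banach space) adjoint of `T`, acting between dual spaces by `y* ↦ y* ∘ T`. -/
noncomputable def operatorAdjoint (T : X →L[𝕜] Y) :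
    (Y →L[𝕜] 𝕜) →L[𝕜] (X →L[𝕜] 𝕜) :=
  (ContinuousLinearMap.compL 𝕜 X Y 𝕜).flip T

/-- The adjoint as a map between weak duals, which is weak*-weak* continuous. -/
noncomputable def weakAdjoint (T : X →L[𝕜] Y) : WeakDual 𝕜 Y → WeakDual 𝕜 X :=
  fun g => (g : Y →L[𝕜] 𝕜).comp T

theorem weakAdjoint_continuous (T : X →L[𝕜] Y) : Continuous (weakAdjoint 𝕜 T) := by
  apply WeakDual.continuous_of_continuous_eval
  intro x
  exact WeakDual.eval_continuous (T x)

/-- if the adjoint `T*` of a bounded operator `T` between Banach spaces quasi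
attains its norm, then `T*` attains its norm. -/
theorem adjoint_quasi_attains_implies_attains {𝕜 X Y : Type*} [RCLike 𝕜]
    [NormedAddCommGroup X] [NormedSpace 𝕜 X] [CompleteSpace X]
    [NormedAddCommGroup Y] [NormedSpace 𝕜 Y] [CompleteSpace Y] [Nontrivial Y]
    (T : X →L[𝕜] Y)
    (hQNA : ∃ u ∈ closure (⇑(operatorAdjoint 𝕜 T) '' Metric.closedBall 0 1),
      ‖u‖ = ‖operatorAdjoint 𝕜 T‖) :
    ∃ y₀star : Y →L[𝕜] 𝕜, ‖y₀star‖ = 1 ∧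
      ‖operatorAdjoint 𝕜 T y₀star‖ = ‖operatorAdjoint 𝕜 T‖ := by
  obtain ⟨u, hu_mem, hu_norm⟩ := hQNA
  -- The unit ball of the dual, seen in the weak* topology, is compact (Banach–Alaoglu).
  have hK : IsCompact (WeakDual.toStrongDual ⁻¹' Metric.closedBall (0 : Y →L[𝕜] 𝕜) 1) :=
    WeakDual.isCompact_closedBall (𝕜 := 𝕜) (E := Y) 0 1
  -- Its image under the weak*-continuous adjoint map is compact, hence weak*-closed.
  have himg : IsCompact (weakAdjoint 𝕜 T '' (WeakDual.toStrongDual ⁻¹'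
      Metric.closedBall (0 : Y →L[𝕜] 𝕜) 1)) :=
    hK.image (weakAdjoint_continuous 𝕜 T)
  have hclosed : IsClosed (weakAdjoint 𝕜 T '' (WeakDual.toStrongDual ⁻¹'
      Metric.closedBall (0 : Y →L[𝕜] 𝕜) 1)) := himg.isClosed
  -- Pull back along the continuous identity `Dual → WeakDual`: norm-closed.
  set S : Set (X →L[𝕜] 𝕜) := StrongDual.toWeakDual ⁻¹' (weakAdjoint 𝕜 T ''
      (WeakDual.toStrongDual ⁻¹' Metric.closedBall (0 : Y →L[𝕜] 𝕜) 1)) with hS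
  have hSclosed : IsClosed S :=
    hclosed.preimage NormedSpace.Dual.toWeakDual_continuous
  have hsub : (⇑(operatorAdjoint 𝕜 T) '' Metric.closedBall 0 1) ⊆ S := by
    rintro _ ⟨g, hg, rfl⟩
    exact ⟨StrongDual.toWeakDual g, hg, rfl⟩
  have huS : u ∈ S := by
    have := closure_mono hsub hu_mem
    rwa [hSclosed.closure_eq] at this
  obtain ⟨g, hg_ball, hgu⟩ := huS
  have hg_norm : ‖(WeakDual.toStrongDual g : Y →L[𝕜] 𝕜)‖ ≤ 1 := by
    simpa [Metric.mem_closedBall] using hg_ball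
  have hgu' : operatorAdjoint 𝕜 T (WeakDual.toStrongDual g) = u := hgu
  by_cases hT : ‖operatorAdjoint 𝕜 T‖ = 0
  · obtain ⟨y, hy⟩ := exists_ne (0 : Y)
    obtain ⟨f, hf1, _⟩ := exists_dual_vector 𝕜 y (norm_ne_zero_iff.mpr hy)
    refine ⟨f, hf1, ?_⟩
    rw [hT]
    have := (operatorAdjoint 𝕜 T).le_opNorm f
    simp only [hT, zero_mul] at this
    exact le_antisymm this (norm_nonneg _)
  · refine ⟨WeakDual.toStrongDual g, ?_, by rw [hgu', hu_norm]⟩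
    refine le_antisymm hg_norm ?_
    by_contra h
    push_neg at h
    have hle : ‖operatorAdjoint 𝕜 T (WeakDual.toStrongDual g)‖
        ≤ ‖operatorAdjoint 𝕜 T‖ * ‖(WeakDual.toStrongDual g : Y →L[𝕜] 𝕜)‖ :=
      (operatorAdjoint 𝕜 T).le_opNorm _
    rw [hgu', hu_norm] at hle
    have hpos : 0 < ‖operatorAdjoint 𝕜 T‖ := by
      have h0 := norm_nonneg (operatorAdjoint 𝕜 T)
      exact h0.lt_of_ne (Ne.symm hT)
    nlinarith
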